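/- Let n ≥ 0 and let 0 = E_{n+1} → E_n → ⋯ → E_1 → E_0 be a chain of morphisms of bounded spectral sequences, with composite maps φ(i,j): E_i → E_j for i ≥ j. Assume (a) the E_2-page of E_i vanishes outside columns p ∈ [i, n], and (b) for each 0 ≤ i ≤ n, φ_2^{p,q}(i, i-1) is an isomorphism for p ≥ i+1 and an epimorphism for p = i. Then for every 0 ≤ i ≤ n, the filtration subspace L^i of the abutment of E_0 equals the image of the induced map on abutments H_{E_i} → H_{E_0}. -/

import Mathlib

open CategoryTheory

/-- A bounded, convergent, cohomological spectral sequence of abelian groups,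
starting at the `E₂`-page.  The field `E r` is the page `E_{r+2}`; `d` is the
differential `E_r^{p,q} → E_r^{p+r, q-r+1}`; `next` identifies the `(r+1)`-st page
with the homology (kernel modulo image) of the `r`-th page; `H` is the graded
abutment, with finite decreasing filtration `L` whose graded pieces
`L^s H^{s+t}/L^{s+1} H^{s+t}` are identified (`stabIso`) with the stable value
`E_∞^{s,t} = E_r^{s,t}` for `r ≥ stab s t`. -/
structure ConvSS : Type 1 where
  E : ℕ → ℤ → ℤ → AddCommGrpCat.{0}
  d : ∀ (r : ℕ) (p q p' q' : ℤ), p + ((r : ℤ) + 2) = p' → q - ((r : ℤ) + 2) + 1 = q' →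
      (↥(E r p q) →+ ↥(E r p' q'))
  d_comp_d : ∀ (r : ℕ) (p q p' q' p'' q'' : ℤ) (h1 : p + ((r : ℤ) + 2) = p')
      (h2 : q - ((r : ℤ) + 2) + 1 = q') (h3 : p' + ((r : ℤ) + 2) = p'')
      (h4 : q' - ((r : ℤ) + 2) + 1 = q''),
      (d r p' q' p'' q'' h3 h4).comp (d r p q p' q' h1 h2) = 0
  next : ∀ (r : ℕ) (p q : ℤ),
      ↥(E (r + 1) p q) ≃+
        (↥((d r p q (p + ((r : ℤ) + 2)) (q - ((r : ℤ) + 2) + 1) rfl rfl).ker) ⧸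
          ((d r (p - ((r : ℤ) + 2)) (q + ((r : ℤ) + 2) - 1) p q (by ring)
              (by ring)).range.addSubgroupOf
            (d r p q (p + ((r : ℤ) + 2)) (q - ((r : ℤ) + 2) + 1) rfl rfl).ker))
  bound : ℕ
  bdd : ∀ (r : ℕ) (p q : ℤ), ((bound : ℤ) < |p| ∨ (bound : ℤ) < |q|) →
      Subsingleton ↥(E r p q)
  H : ℤ → AddCommGrpCat.{0}
  L : ℤ → (n : ℤ) → AddSubgroup ↥(H n)
  L_antitone : ∀ n : ℤ, Antitone (fun s => L s n)
  L_exhaustive : ∀ n : ℤ, ∃ s : ℤ, L s n = ⊤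
  L_separated : ∀ n : ℤ, ∃ s : ℤ, L s n = ⊥
  stab : ℤ → ℤ → ℕ
  stabIso : ∀ (s t : ℤ) (r : ℕ), stab s t ≤ r →
      ((↥(L s (s + t)) ⧸ (L (s + 1) (s + t)).addSubgroupOf (L s (s + t))) ≃+
        ↥(E r s t))

/-- A morphism of convergent spectral sequences: maps on every page commuting with the
differentials and compatible with the passage to the next page (induced map on
homology), together with a filtered map of abutments compatible with the
identification of the graded pieces with the stable pages. -/
structure ConvSS.Hom (A B : ConvSS) where
  f : ∀ (r : ℕ) (p q : ℤ), ↥(A.E r p q) →+ ↥(B.E r p q)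
  comm : ∀ (r : ℕ) (p q p' q' : ℤ) (h1 : p + ((r : ℤ) + 2) = p')
      (h2 : q - ((r : ℤ) + 2) + 1 = q'),
      (f r p' q').comp (A.d r p q p' q' h1 h2) = (B.d r p q p' q' h1 h2).comp (f r p q)
  compat_next : ∀ (r : ℕ) (p q : ℤ)
      (x : ↥((A.d r p q (p + ((r : ℤ) + 2)) (q - ((r : ℤ) + 2) + 1) rfl rfl).ker))
      (y : ↥((B.d r p q (p + ((r : ℤ) + 2)) (q - ((r : ℤ) + 2) + 1) rfl rfl).ker))
      (_ : (y : ↥(B.E r p q)) = f r p q (x : ↥(A.E r p q)))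
      (z : ↥(A.E (r + 1) p q)),
      A.next r p q z = QuotientAddGroup.mk x →
      B.next r p q (f (r + 1) p q z) = QuotientAddGroup.mk y
  h : ∀ n : ℤ, ↥(A.H n) →+ ↥(B.H n)
  filt : ∀ (s n : ℤ), (A.L s n).map (h n) ≤ B.L s n
  compat_abut : ∀ (s t : ℤ) (r : ℕ) (hA : A.stab s t ≤ r) (hB : B.stab s t ≤ r)
      (x : ↥(A.L s (s + t))) (y : ↥(B.L s (s + t)))
      (_ : (y : ↥(B.H (s + t))) = h (s + t) (x : ↥(A.H (s + t)))),
      B.stabIso s t r hB (QuotientAddGroup.mk y) =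
        f r s t (A.stabIso s t r hA (QuotientAddGroup.mk x))

/-- The composite map on abutments `H_{E_i} → H_{E_0}` induced by a chain of morphisms
of spectral sequences `⋯ → E_2 → E_1 → E_0` (here `ψ i : E_{i+1} → E_i`). -/
def abutCompDown (𝔼 : ℕ → ConvSS) (ψ : ∀ i : ℕ, ConvSS.Hom (𝔼 (i + 1)) (𝔼 i)) (m : ℤ) :
    ∀ i : ℕ, ↥((𝔼 i).H m) →+ ↥((𝔼 0).H m)
  | 0 => AddMonoidHom.id _
  | (i + 1) => (abutCompDown 𝔼 ψ m i).comp ((ψ i).h m)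
/-- Downward induction on integers from a base `b`. -/
lemma int_down_induction {P : ℤ → Prop} (b : ℤ) (base : ∀ s, b ≤ s → P s)
    (step : ∀ s, P (s + 1) → P s) (s : ℤ) : P s := by
  have key : ∀ k : ℕ, ∀ s : ℤ, b - k ≤ s → P s := by
    intro k
    induction k with
    | zero => intro s hs; exact base s (by omega)
    | succ k ih =>
      intro s hs
      by_cases h : b - k ≤ s
      · exact ih s h
      · exact step s (ih (s + 1) (by omega))
  exact key (b - s).toNat s (by omega)

namespace ConvSS

lemma subsingleton_succ (A : ConvSS) (r : ℕ) (p q : ℤ)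
    (h : Subsingleton ↥(A.E r p q)) : Subsingleton ↥(A.E (r + 1) p q) := by
  have h1 : Subsingleton
      ↥((A.d r p q (p + ((r : ℤ) + 2)) (q - ((r : ℤ) + 2) + 1) rfl rfl).ker) :=
    ⟨fun a b => Subtype.ext (Subsingleton.elim _ _)⟩
  have h2 : Subsingleton
      (↥((A.d r p q (p + ((r : ℤ) + 2)) (q - ((r : ℤ) + 2) + 1) rfl rfl).ker) ⧸
        ((A.d r (p - ((r : ℤ) + 2)) (q + ((r : ℤ) + 2) - 1) p q (by ring)
            (by ring)).range.addSubgroupOf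
          (A.d r p q (p + ((r : ℤ) + 2)) (q - ((r : ℤ) + 2) + 1) rfl rfl).ker)) :=
    Quotient.instSubsingletonQuotient _
  exact (A.next r p q).toEquiv.subsingleton

lemma subsingleton_page (A : ConvSS) (p q : ℤ)
    (h : Subsingleton ↥(A.E 0 p q)) (r : ℕ) : Subsingleton ↥(A.E r p q) := by
  induction r with
  | zero => exact h
  | succ r ih => exact A.subsingleton_succ r p q ih

lemma L_succ_eq (A : ConvSS) (s t : ℤ)
    (h : Subsingleton ↥(A.E (A.stab s t) s t)) :
    A.L s (s + t) = A.L (s + 1) (s + t) := by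
  refine le_antisymm ?_ (A.L_antitone (s + t) (by linarith : s ≤ s + 1))
  intro x hx
  have hq : Subsingleton
      (↥(A.L s (s + t)) ⧸ (A.L (s + 1) (s + t)).addSubgroupOf (A.L s (s + t))) :=
    (A.stabIso s t (A.stab s t) le_rfl).toEquiv.subsingleton
  have h0 : (QuotientAddGroup.mk (⟨x, hx⟩ : ↥(A.L s (s + t))) :
      ↥(A.L s (s + t)) ⧸ (A.L (s + 1) (s + t)).addSubgroupOf (A.L s (s + t))) = 0 :=
    Subsingleton.elim _ _
  have := (QuotientAddGroup.eq_zero_iff _).mp h0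
  rwa [AddSubgroup.mem_addSubgroupOf] at this

lemma L_succ_eq' (A : ConvSS) (s m : ℤ)
    (h : Subsingleton ↥(A.E (A.stab s (m - s)) s (m - s))) :
    A.L s m = A.L (s + 1) m := by
  have hm : s + (m - s) = m := by ring
  have := A.L_succ_eq s (m - s) h
  rwa [hm] at this

lemma L_eq_top (A : ConvSS) (i : ℤ)
    (hv : ∀ p q : ℤ, p < i → Subsingleton ↥(A.E 0 p q)) (s : ℤ) (hs : s ≤ i) (m : ℤ) :
    A.L s m = ⊤ := by
  obtain ⟨s0, hs0⟩ := A.L_exhaustive m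
  rcases le_or_gt s s0 with hle | hlt
  · exact top_le_iff.mp (hs0 ▸ A.L_antitone m hle)
  · have : ∀ s' : ℤ, s0 ≤ s' → (s' ≤ i → A.L s' m = ⊤) := by
      refine Int.le_induction ?_ ?_
      · intro _; exact hs0
      · intro s' _ ih hs'
        have hpc : A.L s' m = A.L (s' + 1) m :=
          A.L_succ_eq' s' m (A.subsingleton_page s' (m - s')
            (hv s' (m - s') (by omega)) _)
        rw [← hpc]
        exact ih (by omega)
    exact this s hlt.le hs

lemma L_eq_bot (A : ConvSS) (N : ℤ)
    (hv : ∀ p q : ℤ, N < p → Subsingleton ↥(A.E 0 p q)) (s : ℤ) (hs : N < s) (m : ℤ) :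
    A.L s m = ⊥ := by
  obtain ⟨s1, hs1⟩ := A.L_separated m
  refine int_down_induction (P := fun s' => N < s' → A.L s' m = ⊥) s1 ?_ ?_ s hs
  · intro s' hle _
    exact le_bot_iff.mp (hs1 ▸ A.L_antitone m hle)
  · intro s' ih hNs'
    have hpc : A.L s' m = A.L (s' + 1) m :=
      A.L_succ_eq' s' m (A.subsingleton_page s' (m - s') (hv s' (m - s') hNs') _)
    rw [hpc]
    exact ih (by omega)

end ConvSS
namespace ConvSS

lemma Hom.comm_apply {A B : ConvSS} (φ : Hom A B) (r : ℕ) (p q p' q' : ℤ)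
    (h1 : p + ((r : ℤ) + 2) = p') (h2 : q - ((r : ℤ) + 2) + 1 = q') (a : ↥(A.E r p q)) :
    φ.f r p' q' (A.d r p q p' q' h1 h2 a) = B.d r p q p' q' h1 h2 (φ.f r p q a) := by
  have := DFunLike.congr_fun (φ.comm r p q p' q' h1 h2) a
  simpa using this

lemma Hom.pages {A B : ConvSS} (φ : Hom A B) (i : ℤ)
    (hsur0 : ∀ p q : ℤ, i + 1 ≤ p → Function.Surjective (φ.f 0 p q))
    (hinj0 : ∀ p q : ℤ, i + 2 ≤ p → Function.Injective (φ.f 0 p q)) :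
    ∀ r : ℕ, (∀ p q : ℤ, i + 1 ≤ p → Function.Surjective (φ.f r p q)) ∧
      (∀ p q : ℤ, i + (r : ℤ) + 2 ≤ p → Function.Injective (φ.f r p q)) := by
  intro r
  induction r with
  | zero => exact ⟨hsur0, fun p q hp => hinj0 p q (by omega)⟩
  | succ r ih =>
    obtain ⟨ihs, ihi⟩ := ih
    constructor
    · -- surjectivity
      intro p q hp z
      obtain ⟨y, hy⟩ := QuotientAddGroup.mk_surjective (B.next r p q z)
      obtain ⟨x0, hx0⟩ := ihs p q hp (y : ↥(B.E r p q))
      have hdx : A.d r p q (p + ((r : ℤ) + 2)) (q - ((r : ℤ) + 2) + 1) rfl rfl x0 = 0 := by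
        apply ihi (p + ((r : ℤ) + 2)) (q - ((r : ℤ) + 2) + 1) (by omega)
        rw [φ.comm_apply, hx0, map_zero]
        exact y.2
      set x : ↥((A.d r p q (p + ((r : ℤ) + 2)) (q - ((r : ℤ) + 2) + 1) rfl rfl).ker) :=
        ⟨x0, hdx⟩ with hxdef
      set z' := (A.next r p q).symm (QuotientAddGroup.mk x) with hz'def
      have hz' : A.next r p q z' = QuotientAddGroup.mk x :=
        (A.next r p q).apply_symm_apply _
      have hcn := φ.compat_next r p q x y hx0.symm z' hz'
      exact ⟨z', (B.next r p q).injective (hcn.trans hy)⟩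
    · -- injectivity
      intro p q hp
      rw [injective_iff_map_eq_zero]
      intro z hz
      obtain ⟨x, hx⟩ := QuotientAddGroup.mk_surjective (A.next r p q z)
      have hfxker : φ.f r p q (x : ↥(A.E r p q)) ∈
          (B.d r p q (p + ((r : ℤ) + 2)) (q - ((r : ℤ) + 2) + 1) rfl rfl).ker := by
        rw [AddMonoidHom.mem_ker, ← φ.comm_apply]
        have : A.d r p q (p + ((r : ℤ) + 2)) (q - ((r : ℤ) + 2) + 1) rfl rfl
            (x : ↥(A.E r p q)) = 0 := x.2
        rw [this, map_zero]
      have hcn := φ.compat_next r p q x ⟨φ.f r p q (x : ↥(A.E r p q)), hfxker⟩ rfl z hx.symm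
      rw [hz, map_zero] at hcn
      have hmem := (QuotientAddGroup.eq_zero_iff _).mp hcn.symm
      rw [AddSubgroup.mem_addSubgroupOf] at hmem
      obtain ⟨w, hw⟩ := hmem
      obtain ⟨u, hu⟩ := ihs (p - ((r : ℤ) + 2)) (q + ((r : ℤ) + 2) - 1) (by omega) w
      have key : φ.f r p q (A.d r (p - ((r : ℤ) + 2)) (q + ((r : ℤ) + 2) - 1) p q
          (by ring) (by ring) u) = φ.f r p q (x : ↥(A.E r p q)) := by
        rw [φ.comm_apply, hu, hw]
      have hxd := ihi p q (by omega) key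
      have hmk0 : (QuotientAddGroup.mk x :
          ↥((A.d r p q (p + ((r : ℤ) + 2)) (q - ((r : ℤ) + 2) + 1) rfl rfl).ker) ⧸
            ((A.d r (p - ((r : ℤ) + 2)) (q + ((r : ℤ) + 2) - 1) p q (by ring)
                (by ring)).range.addSubgroupOf
              (A.d r p q (p + ((r : ℤ) + 2)) (q - ((r : ℤ) + 2) + 1) rfl rfl).ker)) = 0 := by
        rw [QuotientAddGroup.eq_zero_iff, AddSubgroup.mem_addSubgroupOf]
        exact ⟨u, hxd⟩
      apply (A.next r p q).injective
      rw [hx.symm, hmk0, map_zero]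

end ConvSS
namespace ConvSS

lemma Hom.filt_map_eq {A B : ConvSS} (φ : Hom A B) (N : ℤ)
    (hbotA : ∀ s m : ℤ, N < s → A.L s m = ⊥) (hbotB : ∀ s m : ℤ, N < s → B.L s m = ⊥)
    (s0 : ℤ)
    (hsur : ∀ (r : ℕ) (s t : ℤ), s0 ≤ s → Function.Surjective (φ.f r s t)) :
    ∀ s : ℤ, s0 ≤ s → ∀ m : ℤ, (A.L s m).map (φ.h m) = B.L s m := by
  refine int_down_induction (P := fun s => s0 ≤ s → ∀ m, (A.L s m).map (φ.h m) = B.L s m)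
    (N + 1) ?_ ?_
  · intro s hNs _ m
    rw [hbotA s m (by omega), hbotB s m (by omega), AddSubgroup.map_bot]
  · intro s ih hs m
    refine le_antisymm (φ.filt s m) ?_
    intro y hy
    obtain ⟨t, rfl⟩ : ∃ t, m = s + t := ⟨m - s, by ring⟩
    set r := max (A.stab s t) (B.stab s t) with hrdef
    have hAr : A.stab s t ≤ r := le_max_left _ _
    have hBr : B.stab s t ≤ r := le_max_right _ _
    set eB := B.stabIso s t r hBr (QuotientAddGroup.mk (⟨y, hy⟩ : ↥(B.L s (s + t))))
      with heBdef
    obtain ⟨eA, heA⟩ := hsur r s t hs eB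
    obtain ⟨x, hx⟩ := QuotientAddGroup.mk_surjective ((A.stabIso s t r hAr).symm eA)
    have hxval : A.stabIso s t r hAr (QuotientAddGroup.mk x) = eA := by
      rw [hx]; exact (A.stabIso s t r hAr).apply_symm_apply _
    have hy1 : φ.h (s + t) (x : ↥(A.H (s + t))) ∈ B.L s (s + t) :=
      φ.filt s (s + t) ⟨(x : ↥(A.H (s + t))), x.2, rfl⟩
    have hca := φ.compat_abut s t r hAr hBr x ⟨φ.h (s + t) (x : ↥(A.H (s + t))), hy1⟩ rfl
    rw [hxval, heA] at hca
    have hq : (QuotientAddGroup.mk (⟨φ.h (s + t) (x : ↥(A.H (s + t))), hy1⟩ :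
        ↥(B.L s (s + t))) : ↥(B.L s (s + t)) ⧸
          (B.L (s + 1) (s + t)).addSubgroupOf (B.L s (s + t))) =
        QuotientAddGroup.mk (⟨y, hy⟩ : ↥(B.L s (s + t))) :=
      (B.stabIso s t r hBr).injective (hca.trans heBdef.symm)
    have hdiff := (QuotientAddGroup.eq (s := (B.L (s + 1) (s + t)).addSubgroupOf
        (B.L s (s + t)))).mp hq
    rw [AddSubgroup.mem_addSubgroupOf] at hdiff
    -- hdiff : -(φ.h x) + y ∈ B.L (s+1) (s+t)
    have hIH := ih (by omega) (s + t)
    rw [← hIH] at hdiff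
    obtain ⟨x', hx'mem, hx'val⟩ := hdiff
    refine ⟨(x : ↥(A.H (s + t))) + x', ?_, ?_⟩
    · exact (A.L s (s + t)).add_mem x.2 (A.L_antitone (s + t) (by omega : s ≤ s + 1) hx'mem)
    · rw [map_add, hx'val]
      push_cast
      abel

end ConvSS
/-- Let `n ≥ 0` and `0 = E_{n+1} → E_n → ⋯ → E_1 → E_0` be a chain of
morphisms of bounded spectral sequences (`𝔼 i` is `E_i` and `ψ i : E_{i+1} → E_i`).
Assume (a) the `E₂`-page of `E_i` vanishes outside the columns `p ∈ [i, n]`, and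
(b) each map `φ₂^{p,q}(i+1, i)` in the chain is an isomorphism for `p ≥ i+2` and an
epimorphism for `p = i+1` (i.e. `φ₂(i, i-1)` is an isomorphism for `p ≥ i+1` and epic
for `p = i`).  Then for every `0 ≤ i ≤ n` the filtration subspace `L^i` of the abutment
of `E_0` equals the image of the induced map `H_{E_i} → H_{E_0}`. -/
theorem ss_flag_filtration_im (n : ℕ) (𝔼 : ℕ → ConvSS)
    (ψ : ∀ i : ℕ, ConvSS.Hom (𝔼 (i + 1)) (𝔼 i))
    (hlast : ∀ (r : ℕ) (p q : ℤ), Subsingleton ↥((𝔼 (n + 1)).E r p q))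
    (ha : ∀ i : ℕ, i ≤ n + 1 → ∀ p q : ℤ,
      (p < (i : ℤ) ∨ (n : ℤ) < p) → Subsingleton ↥((𝔼 i).E 0 p q))
    (hb_iso : ∀ i : ℕ, i ≤ n → ∀ p q : ℤ, (i : ℤ) + 2 ≤ p →
      Function.Bijective ((ψ i).f 0 p q))
    (hb_epi : ∀ i : ℕ, i ≤ n → ∀ q : ℤ,
      Function.Surjective ((ψ i).f 0 ((i : ℤ) + 1) q)) :
    ∀ i : ℕ, i ≤ n → ∀ m : ℤ,
      (𝔼 0).L (i : ℤ) m = (abutCompDown 𝔼 ψ m i).range := by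

  have hbot : ∀ j : ℕ, j ≤ n + 1 → ∀ s m : ℤ, (n : ℤ) < s → (𝔼 j).L s m = ⊥ := by
    intro j hj s m hs
    exact (𝔼 j).L_eq_bot (n : ℤ) (fun p q hp => ha j hj p q (Or.inr hp)) s hs m
  have hsur : ∀ i : ℕ, i ≤ n → ∀ (r : ℕ) (s t : ℤ), (i : ℤ) + 1 ≤ s →
      Function.Surjective ((ψ i).f r s t) := by
    intro i hi r s t hs
    refine ((ψ i).pages (i : ℤ) ?_ ?_ r).1 s t hs
    · intro p q hp
      rcases eq_or_lt_of_le hp with heq | hlt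
      · exact heq ▸ hb_epi i hi q
      · exact (hb_iso i hi p q (by omega)).surjective
    · intro p q hp
      exact (hb_iso i hi p q hp).injective
  have key : ∀ i : ℕ, i ≤ n → ∀ s : ℤ, (i : ℤ) ≤ s → ∀ m : ℤ,
      ((𝔼 i).L s m).map (abutCompDown 𝔼 ψ m i) = (𝔼 0).L s m := by
    intro i
    induction i with
    | zero =>
      intro _ s _ m
      show ((𝔼 0).L s m).map (AddMonoidHom.id _) = (𝔼 0).L s m
      exact AddSubgroup.map_id _
    | succ i ih =>
      intro hin s hs m
      have hi : i ≤ n := Nat.le_of_succ_le hin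
      show ((𝔼 (i + 1)).L s m).map ((abutCompDown 𝔼 ψ m i).comp ((ψ i).h m)) = _
      rw [← AddSubgroup.map_map]
      have hfme := (ψ i).filt_map_eq (n : ℤ)
        (hbot (i + 1) (by omega)) (hbot i (by omega)) ((i : ℤ) + 1)
        (hsur i hi) s (by push_cast at hs ⊢; omega) m
      rw [hfme]
      exact ih hi s (by push_cast at hs ⊢; omega) m
  intro i hi m
  have htop : (𝔼 i).L (i : ℤ) m = ⊤ :=
    (𝔼 i).L_eq_top (i : ℤ) (fun p q hp => ha i (by omega) p q (Or.inl hp)) _ le_rfl m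
  rw [← key i hi (i : ℤ) le_rfl m, htop, AddMonoidHom.range_eq_map]
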